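/- The splitting algebra construction is compatible with base change: if φ : A → B is a ring homomorphism and f is a monic polynomial of degree n over A, then the canonical map B ⊗_A A_f → B_{φf} is an isomorphism of B-algebras, where φf denotes the polynomial over B obtained by applying φ to the coefficients of f. -/

import Mathlib

open MvPolynomial Polynomial

/-- The ideal `(s₁ - f₁, ..., sₙ - fₙ)` defining the splitting algebra, where
`fᵢ = (-1)^i · coeff f (n - i)` are the signed coefficients of `f`. -/
noncomputable def splittingIdeal (A : Type*) [CommRing A] (f : Polynomial A) (n : ℕ) :
    Ideal (MvPolynomial (Fin n) A) :=
  Ideal.span (Set.range fun i : Fin n =>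
    esymm (Fin n) A ((i : ℕ) + 1) -
      MvPolynomial.C ((-1 : A) ^ ((i : ℕ) + 1) * f.coeff (n - ((i : ℕ) + 1))))

/-- The splitting algebra `A_f = A[t₁,...,tₙ]/(s₁ - f₁, ..., sₙ - fₙ)`. -/
noncomputable def SplittingAlgebra (A : Type*) [CommRing A] (f : Polynomial A) (n : ℕ) :=
  MvPolynomial (Fin n) A ⧸ splittingIdeal A f n

noncomputable instance (A : Type*) [CommRing A] (f : Polynomial A) (n : ℕ) :
    CommRing (SplittingAlgebra A f n) := Ideal.Quotient.commRing _

noncomputable instance (R A : Type*) [CommSemiring R] [CommRing A] [Algebra R A]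
    (f : Polynomial A) (n : ℕ) : Algebra R (SplittingAlgebra A f n) :=
  Ideal.Quotient.algebra R

/-- The universal roots `τᵢ` of `f` in the splitting algebra. -/
noncomputable def univRoot (A : Type*) [CommRing A] (f : Polynomial A) (n : ℕ) (i : Fin n) :
    SplittingAlgebra A f n :=
  Ideal.Quotient.mk (splittingIdeal A f n) (MvPolynomial.X i)

/-- The action of a permutation `σ` on the splitting algebra, sending `τᵢ` to `τ_{σ⁻¹ i}`. -/
noncomputable def permHom (A : Type*) [CommRing A] (f : Polynomial A) (n : ℕ)
    (σ : Equiv.Perm (Fin n)) : SplittingAlgebra A f n →ₐ[A] SplittingAlgebra A f n :=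
  Ideal.Quotient.liftₐ (splittingIdeal A f n)
    ((Ideal.Quotient.mkₐ A (splittingIdeal A f n)).comp
      (rename (σ.symm : Fin n → Fin n)))
    (by
      intro a ha
      have h : splittingIdeal A f n ≤ RingHom.ker
          ((Ideal.Quotient.mkₐ A (splittingIdeal A f n)).comp
            (rename (σ.symm : Fin n → Fin n))) := by
        rw [splittingIdeal, Ideal.span_le]
        rintro _ ⟨i, rfl⟩
        have : (rename (σ.symm : Fin n → Fin n))
            (esymm (Fin n) A ((i : ℕ) + 1) -
              MvPolynomial.C ((-1 : A) ^ ((i : ℕ) + 1) * f.coeff (n - ((i : ℕ) + 1)))) =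
            esymm (Fin n) A ((i : ℕ) + 1) -
              MvPolynomial.C ((-1 : A) ^ ((i : ℕ) + 1) * f.coeff (n - ((i : ℕ) + 1))) := by
          rw [map_sub, rename_esymm, rename_C]
        simp only [SetLike.mem_coe, RingHom.mem_ker, AlgHom.coe_comp, Function.comp_apply, this]
        rw [Ideal.Quotient.mkₐ_eq_mk, Ideal.Quotient.eq_zero_iff_mem]
        exact Ideal.subset_span ⟨i, rfl⟩
      exact h ha)


open scoped TensorProduct in
theorem splittingAlgebra_baseChange {A B : Type*} [CommRing A] [CommRing B] [Algebra A B]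
    (f : Polynomial A) (n : ℕ) (hmonic : f.Monic) (hdeg : f.natDegree = n) :
    ∃ e : (B ⊗[A] SplittingAlgebra A f n) ≃ₐ[B]
        SplittingAlgebra B (f.map (algebraMap A B)) n,
      ∀ i : Fin n, e (1 ⊗ₜ[A] univRoot A f n i) =
        univRoot B (f.map (algebraMap A B)) n i := by
  set g : Polynomial B := f.map (algebraMap A B) with hg
  set I := splittingIdeal A f n with hI
  set J := splittingIdeal B g n with hJ
  haveI htower : IsScalarTower A B (SplittingAlgebra B g n) :=
    IsScalarTower.of_algebraMap_eq fun a => rfl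
  -- the A-algebra hom from A_f to B_g
  have hθ : ∀ p ∈ I, (Ideal.Quotient.mkₐ A J).comp
      (MvPolynomial.mapAlgHom (Algebra.ofId A B)) p = 0 := by
    intro p hp
    have h : I ≤ RingHom.ker ((Ideal.Quotient.mkₐ A J).comp
        (MvPolynomial.mapAlgHom (Algebra.ofId A B))) := by
      rw [hI, splittingIdeal, Ideal.span_le]
      rintro _ ⟨i, rfl⟩
      have : (MvPolynomial.map (algebraMap A B))
          (esymm (Fin n) A ((i : ℕ) + 1) -
            MvPolynomial.C ((-1 : A) ^ ((i : ℕ) + 1) * f.coeff (n - ((i : ℕ) + 1)))) =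
          esymm (Fin n) B ((i : ℕ) + 1) -
            MvPolynomial.C ((-1 : B) ^ ((i : ℕ) + 1) * g.coeff (n - ((i : ℕ) + 1))) := by
        rw [map_sub, map_esymm, MvPolynomial.map_C]
        congr 1
        rw [map_mul, map_pow, map_neg, map_one, hg, Polynomial.coeff_map]
      simp only [SetLike.mem_coe, RingHom.mem_ker, AlgHom.coe_comp, Function.comp_apply,
        MvPolynomial.mapAlgHom_apply]
      show (Ideal.Quotient.mkₐ A J) ((MvPolynomial.map (algebraMap A B)) _) = 0
      rw [this, Ideal.Quotient.mkₐ_eq_mk, Ideal.Quotient.eq_zero_iff_mem]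
      exact Ideal.subset_span ⟨i, rfl⟩
    exact h hp
  set ψ : SplittingAlgebra A f n →ₐ[A] SplittingAlgebra B g n :=
    Ideal.Quotient.liftₐ I _ hθ with hψ
  have hψmk : ∀ p, ψ (Ideal.Quotient.mk I p) =
      Ideal.Quotient.mk J (MvPolynomial.map (algebraMap A B) p) := fun p => rfl
  have hψτ : ∀ i, ψ (univRoot A f n i) = univRoot B g n i := by
    intro i
    show ψ (Ideal.Quotient.mk I (MvPolynomial.X i)) = _
    rw [hψmk, MvPolynomial.map_X]
    rfl
  -- forward map
  set Φ : (B ⊗[A] SplittingAlgebra A f n) →ₐ[B] SplittingAlgebra B g n :=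
    Algebra.TensorProduct.lift (Algebra.ofId B _) ψ (fun x y => Commute.all _ _) with hΦ
  have hΦτ : ∀ i, Φ (1 ⊗ₜ[A] univRoot A f n i) = univRoot B g n i := by
    intro i
    rw [hΦ, Algebra.TensorProduct.lift_tmul, map_one, one_mul, hψτ]
  -- backward map
  have hmk : (MvPolynomial.aeval (univRoot A f n) : MvPolynomial (Fin n) A →ₐ[A] _) =
      Ideal.Quotient.mkₐ A I := by
    apply MvPolynomial.algHom_ext
    intro i
    simp only [MvPolynomial.aeval_X, Ideal.Quotient.mkₐ_eq_mk]
    rfl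
  have hχ0 : ∀ p ∈ J, (MvPolynomial.aeval (fun i => (1 : B) ⊗ₜ[A] univRoot A f n i) :
      MvPolynomial (Fin n) B →ₐ[B] (B ⊗[A] SplittingAlgebra A f n)) p = 0 := by
    intro p hp
    have h : J ≤ RingHom.ker (MvPolynomial.aeval (fun i => (1 : B) ⊗ₜ[A] univRoot A f n i) :
        MvPolynomial (Fin n) B →ₐ[B] (B ⊗[A] SplittingAlgebra A f n)).toRingHom := by
      rw [hJ, splittingIdeal, Ideal.span_le]
      rintro _ ⟨i, rfl⟩
      simp only [SetLike.mem_coe, RingHom.mem_ker, AlgHom.toRingHom_eq_coe,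
        RingHom.coe_coe, map_sub, MvPolynomial.aeval_C]
      have key : (MvPolynomial.aeval (fun i => (1 : B) ⊗ₜ[A] univRoot A f n i))
          (esymm (Fin n) B ((i : ℕ) + 1)) =
          1 ⊗ₜ[A] (Ideal.Quotient.mk I (esymm (Fin n) A ((i : ℕ) + 1))) := by
        rw [← map_esymm (Fin n) A ((i : ℕ) + 1) (algebraMap A B), MvPolynomial.aeval_map_algebraMap]
        have : (MvPolynomial.aeval (fun i => (1 : B) ⊗ₜ[A] univRoot A f n i) :
            MvPolynomial (Fin n) A →ₐ[A] (B ⊗[A] SplittingAlgebra A f n)) =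
            (Algebra.TensorProduct.includeRight).comp
              (MvPolynomial.aeval (univRoot A f n)) := by
          apply MvPolynomial.algHom_ext
          intro j
          simp
        rw [this, hmk]
        rfl
      rw [key]
      have hesymm : (Ideal.Quotient.mk I) (esymm (Fin n) A ((i : ℕ) + 1)) =
          algebraMap A (SplittingAlgebra A f n)
            ((-1 : A) ^ ((i : ℕ) + 1) * f.coeff (n - ((i : ℕ) + 1))) := by
        rw [show algebraMap A (SplittingAlgebra A f n)
            ((-1 : A) ^ ((i : ℕ) + 1) * f.coeff (n - ((i : ℕ) + 1))) =
            (Ideal.Quotient.mk I) (MvPolynomial.C ((-1 : A) ^ ((i : ℕ) + 1) *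
              f.coeff (n - ((i : ℕ) + 1)))) from rfl]
        rw [Ideal.Quotient.mk_eq_mk_iff_sub_mem]
        exact Ideal.subset_span ⟨i, rfl⟩
      erw [hesymm,
        show (1 : B) ⊗ₜ[A] (algebraMap A (SplittingAlgebra A f n)
            ((-1 : A) ^ ((i : ℕ) + 1) * f.coeff (n - ((i : ℕ) + 1)))) =
          algebraMap A (B ⊗[A] SplittingAlgebra A f n)
            ((-1 : A) ^ ((i : ℕ) + 1) * f.coeff (n - ((i : ℕ) + 1))) from
          Algebra.TensorProduct.includeRight.commutes _,
        IsScalarTower.algebraMap_apply A B (B ⊗[A] SplittingAlgebra A f n)]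
      rw [map_mul, map_pow, map_neg, map_one, ← Polynomial.coeff_map, ← hg, sub_self]
    exact h hp
  set χ : SplittingAlgebra B g n →ₐ[B] (B ⊗[A] SplittingAlgebra A f n) :=
    Ideal.Quotient.liftₐ J _ hχ0 with hχ
  have hχmk : ∀ p, χ (Ideal.Quotient.mk J p) =
      MvPolynomial.aeval (fun i => (1 : B) ⊗ₜ[A] univRoot A f n i) p := fun p => rfl
  have hχτ : ∀ i, χ (univRoot B g n i) = 1 ⊗ₜ[A] univRoot A f n i := by
    intro i
    show χ (Ideal.Quotient.mk J (MvPolynomial.X i)) = _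
    rw [hχmk, MvPolynomial.aeval_X]
  -- inverses
  have h1 : Φ.comp χ = AlgHom.id B _ := by
    apply Ideal.Quotient.algHom_ext
    apply MvPolynomial.algHom_ext
    intro i
    show Φ (χ (Ideal.Quotient.mk J (MvPolynomial.X i))) = Ideal.Quotient.mk J (MvPolynomial.X i)
    have : χ (Ideal.Quotient.mk J (MvPolynomial.X i)) = 1 ⊗ₜ[A] univRoot A f n i := hχτ i
    rw [this, hΦτ]
    rfl
  have h2 : χ.comp Φ = AlgHom.id B _ := by
    apply Algebra.TensorProduct.ext
    · apply AlgHom.ext; intro b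
      show χ (Φ (b ⊗ₜ[A] 1)) = b ⊗ₜ[A] 1
      rw [hΦ, Algebra.TensorProduct.lift_tmul, map_one, mul_one, Algebra.ofId_apply,
        AlgHom.commutes, Algebra.TensorProduct.algebraMap_apply]
      rfl
    · apply Ideal.Quotient.algHom_ext
      apply MvPolynomial.algHom_ext
      intro i
      show χ (Φ (1 ⊗ₜ[A] Ideal.Quotient.mk I (MvPolynomial.X i))) =
        1 ⊗ₜ[A] Ideal.Quotient.mk I (MvPolynomial.X i)
      erw [show (1 : B) ⊗ₜ[A] Ideal.Quotient.mk I (MvPolynomial.X i) =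
        1 ⊗ₜ[A] univRoot A f n i from rfl, hΦτ, hχτ]
  exact ⟨AlgEquiv.ofAlgHom Φ χ h1 h2, hΦτ⟩
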